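/- Let Ω = (U,Ξ) be a unimodular system and Δ_Ω = {w ∈ W_Ω : |ξ_i(w)| ≤ 1 for all i} (equivalently the intersection of W_Ω = Φ(U) with the cube [−1,1]^N). Then Δ_Ω is a lattice polytope with respect to L_Ω = W_Ω ∩ ℤ^N: every vertex of Δ_Ω lies in L_Ω; moreover Δ_Ω is reflexive. -/

import Mathlib

/-- `S` is a maximal linearly independent subset of the family of forms `ξ`. -/
def MaxLinIndep {ι : Type*} {U : Type*} [AddCommGroup U] [Module ℝ U]
    (ξ : ι → Module.Dual ℝ U) (S : Set ι) : Prop :=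
  LinearIndependent ℝ (fun i : S => ξ i) ∧
    ∀ T : Set ι, S ⊆ T → LinearIndependent ℝ (fun i : T => ξ i) → T = S

/-- A unimodular system: nonzero forms spanning `U*` such that every maximal linearly
independent subset generates the same abelian group `M` over `ℤ`. -/
def IsUnimodularSystem {ι : Type*} {U : Type*} [AddCommGroup U] [Module ℝ U]
    (ξ : ι → Module.Dual ℝ U) (M : Submodule ℤ (Module.Dual ℝ U)) : Prop :=
  (∀ k, ξ k ≠ 0) ∧ Submodule.span ℝ (Set.range ξ) = ⊤ ∧
    ∀ S : Set ι, MaxLinIndep ξ S → Submodule.span ℤ (ξ '' S) = M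

/-- The `ℤ`-submodule of integer points of `ι → ℝ`. -/
def intPts (ι : Type*) : Submodule ℤ (ι → ℝ) where
  carrier := {x | ∀ k, ∃ z : ℤ, x k = z}
  zero_mem' := fun k => ⟨0, by simp⟩
  add_mem' := by
    rintro a b ha hb k
    obtain ⟨z, hz⟩ := ha k; obtain ⟨w, hw⟩ := hb k
    exact ⟨z + w, by simp [hz, hw]⟩
  smul_mem' := by
    rintro c a ha k
    obtain ⟨z, hz⟩ := ha k
    exact ⟨c * z, by simp [hz, zsmul_eq_mul]⟩

/-- The evaluation map `Φ : U → ℝᴺ`, `Φ(u) = (ξ₁(u), …, ξ_N(u))`. -/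
noncomputable def PhiMap {N : ℕ} {U : Type*} [AddCommGroup U] [Module ℝ U]
    (ξ : Fin N → Module.Dual ℝ U) : U →ₗ[ℝ] (Fin N → ℝ) :=
  LinearMap.pi fun k => ξ k

lemma span_int_eval {U : Type*} [AddCommGroup U] [Module ℝ U] (u : U)
    {s : Set (Module.Dual ℝ U)} (hs : ∀ η ∈ s, ∃ z : ℤ, η u = z)
    {η : Module.Dual ℝ U} (hη : η ∈ Submodule.span ℤ s) : ∃ z : ℤ, η u = z := by
  induction hη using Submodule.span_induction with
  | mem x hx => exact hs x hx
  | zero => exact ⟨0, by simp⟩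
  | add x y _ _ hx hy =>
      obtain ⟨a, ha⟩ := hx; obtain ⟨b, hb⟩ := hy
      exact ⟨a + b, by simp [LinearMap.add_apply, ha, hb]⟩
  | smul c x _ hx =>
      obtain ⟨a, ha⟩ := hx
      exact ⟨c * a, by simp [LinearMap.smul_apply, ha, zsmul_eq_mul]⟩

lemma pullback_indices {N : ℕ} {U : Type*} [AddCommGroup U] [Module ℝ U]
    (ξ : Fin N → Module.Dual ℝ U) (A : Set (Fin N)) (b : Set (Module.Dual ℝ U))
    (hbA : b ⊆ ξ '' A) (hb : LinearIndependent ℝ ((↑) : b → Module.Dual ℝ U)) :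
    ∃ S : Set (Fin N), S ⊆ A ∧ ξ '' S = b ∧ LinearIndependent ℝ (fun i : S => ξ i) := by
  choose g hgA hgξ using fun v : b => hbA v.2
  refine ⟨Set.range g, ?_, ?_, ?_⟩
  · rintro i ⟨v, rfl⟩; exact hgA v
  · ext w; constructor
    · rintro ⟨i, ⟨v, rfl⟩, rfl⟩; rw [hgξ v]; exact v.2
    · intro hw; exact ⟨g ⟨w, hw⟩, ⟨⟨w, hw⟩, rfl⟩, hgξ _⟩
  · have he : ∀ i : Set.range g, ξ i ∈ b := by rintro ⟨i, v, rfl⟩; rw [hgξ v]; exact v.2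
    have hinj : Function.Injective (fun i : Set.range g => (⟨ξ i, he i⟩ : b)) := by
      rintro ⟨i, v, hv⟩ ⟨j, w, hw⟩ h
      simp only [Subtype.mk.injEq] at h
      subst hv; subst hw
      have hvw : v = w := Subtype.ext (by rw [← hgξ v, ← hgξ w]; exact h)
      simp [hvw]
    exact hb.comp _ hinj

lemma maxLinIndep_of_span {N : ℕ} {U : Type*} [AddCommGroup U] [Module ℝ U]
    (ξ : Fin N → Module.Dual ℝ U) (S : Set (Fin N))
    (hind : LinearIndependent ℝ (fun i : S => ξ i))
    (hsp : Submodule.span ℝ (ξ '' S) = ⊤) : MaxLinIndep ξ S := by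
  refine ⟨hind, fun T hST hT => ?_⟩
  refine Set.Subset.antisymm (fun j hj => ?_) hST
  by_contra hjS
  have h1 : (⟨j, hj⟩ : T) ∉ {i : T | (i : Fin N) ∈ S} := hjS
  have h2 := hT.notMem_span_image h1
  apply h2
  have himg : (fun i : T => ξ i) '' {i : T | (i : Fin N) ∈ S} = ξ '' S := by
    ext w
    constructor
    · rintro ⟨⟨i, hi⟩, h3, rfl⟩; exact ⟨i, h3, rfl⟩
    · rintro ⟨i, hi, rfl⟩; exact ⟨⟨i, hST hi⟩, hi, rfl⟩
  rw [himg, hsp]; trivial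

set_option maxHeartbeats 1600000 in
/-- The polytope `Δ_Ω = W_Ω ∩ [−1,1]ᴺ` is a lattice polytope for `L_Ω = W_Ω ∩ ℤᴺ`
(every vertex, i.e. extreme point, is a lattice point) and it is reflexive (every vertex
of its polar dual within `W_Ω` pairs integrally with every lattice point). -/
theorem stmt18 {N : ℕ} {U : Type*} [AddCommGroup U] [Module ℝ U] [FiniteDimensional ℝ U]
    (ξ : Fin N → Module.Dual ℝ U) (M : Submodule ℤ (Module.Dual ℝ U))
    (hsys : IsUnimodularSystem ξ M) :
    (∀ x ∈ Set.extremePoints ℝ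
        {x : Fin N → ℝ | x ∈ LinearMap.range (PhiMap ξ) ∧ ∀ k, |x k| ≤ 1},
      ∀ k, ∃ z : ℤ, x k = z) ∧
    (∀ y ∈ Set.extremePoints ℝ
        {y : Fin N → ℝ | y ∈ LinearMap.range (PhiMap ξ) ∧
          ∀ x ∈ {x : Fin N → ℝ | x ∈ LinearMap.range (PhiMap ξ) ∧ ∀ k, |x k| ≤ 1},
            ∑ k, x k * y k ≤ 1},
      ∀ x : Fin N → ℝ, x ∈ LinearMap.range (PhiMap ξ) → (∀ k, ∃ z : ℤ, x k = z) →
        ∃ z : ℤ, ∑ k, x k * y k = z) := by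
  obtain ⟨hne, hspan, hM⟩ := hsys
  -- the forms separate points
  have hker : ∀ u : U, (∀ k, ξ k u = 0) → u = 0 := by
    intro u hu
    rw [← Module.forall_dual_apply_eq_zero_iff ℝ u]
    intro φ
    have hφ : φ ∈ Submodule.span ℝ (Set.range ξ) := by rw [hspan]; trivial
    induction hφ using Submodule.span_induction with
    | mem x hx => obtain ⟨k, rfl⟩ := hx; exact hu k
    | zero => simp
    | add x y _ _ hx hy => simp [LinearMap.add_apply, hx, hy]
    | smul c x _ hx => simp [LinearMap.smul_apply, hx]
  -- every ξ k lies in M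
  have hξM : ∀ k, ξ k ∈ M := by
    intro k
    have hsing : LinearIndependent ℝ ((↑) : ({ξ k} : Set (Module.Dual ℝ U)) → Module.Dual ℝ U) :=
      LinearIndepOn.singleton (v := id) (hne k)
    obtain ⟨b, hbsub, hkb, hspb, hbind⟩ :=
      exists_linearIndepOn_id_extension hsing (Set.singleton_subset_iff.2 (Set.mem_range_self k))
    obtain ⟨S, -, hSb, hSind⟩ := pullback_indices ξ Set.univ b (by
      intro v hv; simpa using hbsub hv) hbind
    have hSsp : Submodule.span ℝ (ξ '' S) = ⊤ := by
      rw [hSb]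
      refine top_unique ?_
      rw [← hspan]
      exact Submodule.span_le.2 (fun v hv => hspb hv)
    have := hM S (maxLinIndep_of_span ξ S hSind hSsp)
    rw [← this, hSb]
    exact Submodule.subset_span (hkb rfl)
  -- an index set S₀ such that ξ '' S₀ is a basis and M = span ℤ (ξ '' S₀)
  obtain ⟨b₀, hb₀sub, hb₀span, hb₀ind⟩ := exists_linearIndependent ℝ (Set.range ξ)
  obtain ⟨S₀, -, hS₀b, hS₀ind⟩ := pullback_indices ξ Set.univ b₀ (by
    intro v hv; simpa using hb₀sub hv) hb₀ind
  have hS₀sp : Submodule.span ℝ (ξ '' S₀) = ⊤ := by rw [hS₀b, hb₀span, hspan]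
  have hMS₀ : Submodule.span ℤ (ξ '' S₀) = M := hM S₀ (maxLinIndep_of_span ξ S₀ hS₀ind hS₀sp)
  have hΦinj : ∀ a b : U, PhiMap ξ a = PhiMap ξ b → a = b := by
    intro a b hab
    have h1 : ∀ k, ξ k (a - b) = 0 := by
      intro k
      have h2 : ξ k a = ξ k b := congrFun hab k
      simp [map_sub, h2]
    exact sub_eq_zero.1 (hker _ h1)
  constructor
  · rintro x hx k
    rw [mem_extremePoints] at hx
    obtain ⟨⟨⟨u, rfl⟩, hxb⟩, hxe⟩ := hx
    have hxb' : ∀ i, |ξ i u| ≤ 1 := fun i => by simpa [PhiMap] using hxb i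
    have hAspan : Submodule.span ℝ (ξ '' {i | |ξ i u| = 1}) = ⊤ := by
      by_contra hAs
      obtain ⟨φ, hφne, hφ0⟩ : ∃ φ : Module.Dual ℝ (Module.Dual ℝ U), φ ≠ 0 ∧
          ∀ η ∈ Submodule.span ℝ (ξ '' {i | |ξ i u| = 1}), φ η = 0 := by
        obtain ⟨f, hf, hmap⟩ :=
          (Submodule.span ℝ (ξ '' {i | |ξ i u| = 1})).exists_dual_map_eq_bot_of_lt_top
            (lt_top_iff_ne_top.2 hAs) inferInstance
        refine ⟨f, hf, fun η hη => ?_⟩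
        have h5 : f η ∈ Submodule.map f (Submodule.span ℝ (ξ '' {i | |ξ i u| = 1})) :=
          Submodule.mem_map_of_mem hη
        rwa [hmap, Submodule.mem_bot] at h5
      set v := (Module.evalEquiv ℝ U).symm φ with hv
      have hvev : ∀ η : Module.Dual ℝ U, η v = φ η := fun η =>
        Module.apply_evalEquiv_symm_apply (R := ℝ) (M := U) η φ
      have hvz : ∀ i, |ξ i u| = 1 → ξ i v = 0 := fun i hi => by
        rw [hvev]; exact hφ0 _ (Submodule.subset_span ⟨i, hi, rfl⟩)
      have hvne : v ≠ 0 := by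
        intro h
        apply hφne
        have h6 : φ = Module.evalEquiv ℝ U v := ((Module.evalEquiv ℝ U).apply_symm_apply φ).symm
        rw [h6, h, map_zero]
      have hNE : (Finset.univ : Finset (Fin N)).Nonempty := ⟨k, Finset.mem_univ k⟩
      set F : Fin N → ℝ := fun i => if |ξ i u| = 1 then 1 else (1 - |ξ i u|) / (|ξ i v| + 1)
        with hF
      set ε := Finset.univ.inf' hNE F with hε
      have hεpos : 0 < ε := by
        rw [hε, Finset.lt_inf'_iff]
        intro i _
        rw [hF]
        dsimp only
        split_ifs with h7
        · norm_num
        · have h8 : |ξ i u| < 1 := lt_of_le_of_ne (hxb' i) h7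
          exact div_pos (by linarith) (by positivity)
      have hbound : ∀ i (w : U), (ξ i w = ξ i u + ε * ξ i v ∨ ξ i w = ξ i u - ε * ξ i v) →
          |ξ i w| ≤ 1 := by
        intro i w hw
        have hεF : ε ≤ F i := Finset.inf'_le _ (Finset.mem_univ i)
        have habs : |ξ i w| ≤ |ξ i u| + ε * |ξ i v| := by
          rcases hw with h | h
          · rw [h]
            refine (abs_add_le _ _).trans ?_
            rw [abs_mul, abs_of_pos hεpos]
          · rw [h, sub_eq_add_neg]
            refine (abs_add_le _ _).trans ?_
            rw [abs_neg, abs_mul, abs_of_pos hεpos]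
        by_cases h7 : |ξ i u| = 1
        · rw [hvz i h7] at habs
          simp only [abs_zero, mul_zero, add_zero] at habs
          exact habs.trans_eq h7
        · have h8 : |ξ i u| < 1 := lt_of_le_of_ne (hxb' i) h7
          rw [hF] at hεF
          simp only [h7, if_false] at hεF
          have h9 : (0:ℝ) < |ξ i v| + 1 := by positivity
          have h10 : ε * (|ξ i v| + 1) ≤ 1 - |ξ i u| := (le_div_iff₀ h9).1 hεF
          nlinarith [abs_nonneg (ξ i v)]
      have h12 := hxe (PhiMap ξ (u - ε • v)) ?mem1 (PhiMap ξ (u + ε • v)) ?mem2 ?seg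
      case mem1 =>
        refine ⟨LinearMap.mem_range_self _ _, fun i => ?_⟩
        exact hbound i _ (Or.inr (by simp [map_sub, map_smul, smul_eq_mul]))
      case mem2 =>
        refine ⟨LinearMap.mem_range_self _ _, fun i => ?_⟩
        exact hbound i _ (Or.inl (by simp [map_add, map_smul, smul_eq_mul]))
      case seg =>
        refine ⟨1/2, 1/2, by norm_num, by norm_num, by norm_num, ?_⟩
        rw [map_sub, map_add]
        module
      have h13 : u - ε • v = u := hΦinj _ _ h12.1
      have h14 : ε • v = 0 := by
        have := sub_eq_self.1 h13
        exact this
      rcases smul_eq_zero.1 h14 with h | h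
      · exact absurd h (ne_of_gt hεpos)
      · exact hvne h
    obtain ⟨b1, hb1sub, hb1span, hb1ind⟩ := exists_linearIndependent ℝ (ξ '' {i | |ξ i u| = 1})
    obtain ⟨S, hSA, hSb, hSind⟩ := pullback_indices ξ _ b1 hb1sub hb1ind
    have hSsp : Submodule.span ℝ (ξ '' S) = ⊤ := by rw [hSb, hb1span, hAspan]
    have hMS : Submodule.span ℤ (ξ '' S) = M := hM S (maxLinIndep_of_span ξ S hSind hSsp)
    have hint : ∃ z : ℤ, ξ k u = z := by
      refine span_int_eval u ?_ (by rw [hMS]; exact hξM k)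
      rintro η ⟨i, hi, rfl⟩
      have h15 : |ξ i u| = 1 := hSA hi
      rcases (abs_eq (by norm_num : (0:ℝ) ≤ 1)).1 h15 with h | h
      · exact ⟨1, by simp [h]⟩
      · exact ⟨-1, by simp [h]⟩
    simpa [PhiMap] using hint
  · intro y hy x hxW hxZ
    rcases Nat.eq_zero_or_pos N with hN | hN
    · subst hN
      exact ⟨0, by simp⟩
    obtain ⟨u, rfl⟩ := hxW
    set T : (Fin N → ℝ) →ₗ[ℝ] Module.Dual ℝ U :=
      { toFun := fun yy => ∑ k, yy k • ξ k
        map_add' := by intro a b; simp [add_smul, Finset.sum_add_distrib]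
        map_smul' := by intro c a; simp [smul_smul, Finset.smul_sum] } with hT
    set G : U →ₗ[ℝ] Module.Dual ℝ U :=
      { toFun := fun w => ∑ k, ξ k w • ξ k
        map_add' := by intro a b; simp only [map_add, add_smul, Finset.sum_add_distrib]
        map_smul' := by
          intro c a
          simp only [map_smul, smul_eq_mul, RingHom.id_apply, Finset.smul_sum, smul_smul] } with hG
    have hTapp : ∀ (yy : Fin N → ℝ) (w : U), T yy w = ∑ k, yy k * ξ k w := by
      intro yy w
      simp [hT, LinearMap.sum_apply, smul_eq_mul]
    have hGapp : ∀ (w w' : U), G w w' = ∑ k, ξ k w * ξ k w' := by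
      intro w w'
      simp [hG, LinearMap.sum_apply, smul_eq_mul]
    have hTG : ∀ w : U, T (PhiMap ξ w) = G w := fun w => rfl
    have hGinj : Function.Injective G := by
      intro a b hab
      have h0 : G (a - b) = 0 := by rw [map_sub, hab, sub_self]
      have h2 : ∑ k, (ξ k (a - b)) ^ 2 = 0 := by
        have h1 : G (a - b) (a - b) = 0 := by rw [h0]; rfl
        rw [hGapp] at h1
        simpa [sq] using h1
      have h3 : ∀ k, ξ k (a - b) = 0 := by
        intro k
        have h4 := (Finset.sum_eq_zero_iff_of_nonneg
          (fun i _ => sq_nonneg (ξ i (a - b)))).1 h2 k (Finset.mem_univ k)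
        exact pow_eq_zero_iff two_ne_zero |>.1 h4
      exact sub_eq_zero.1 (hker _ h3)
    have hGsurj : Function.Surjective G :=
      (LinearMap.injective_iff_surjective_of_finrank_eq_finrank
        Subspace.dual_finrank_eq.symm).1 hGinj
    set Δset := {x : Fin N → ℝ | x ∈ LinearMap.range (PhiMap ξ) ∧ ∀ k, |x k| ≤ 1} with hΔ
    set Qset := {y : Fin N → ℝ | y ∈ LinearMap.range (PhiMap ξ) ∧
      ∀ x ∈ Δset, ∑ k, x k * y k ≤ 1} with hQ
    have hQconv : Convex ℝ Qset := by
      intro a ha b hb p q hp hq hpq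
      refine ⟨Submodule.add_mem _ (Submodule.smul_mem _ _ ha.1) (Submodule.smul_mem _ _ hb.1), ?_⟩
      intro xx hxx
      have h1 := ha.2 xx hxx
      have h2 := hb.2 xx hxx
      have h3 : ∑ k, xx k * (p • a + q • b) k
          = p * (∑ k, xx k * a k) + q * (∑ k, xx k * b k) := by
        rw [Finset.mul_sum, Finset.mul_sum, ← Finset.sum_add_distrib]
        refine Finset.sum_congr rfl fun i _ => ?_
        simp only [Pi.add_apply, Pi.smul_apply, smul_eq_mul]
        ring
      rw [h3]
      nlinarith
    set K0 := (Set.range ξ) ∪ (Set.range fun k => -ξ k) with hK0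
    have hPolSub : ∀ η : Module.Dual ℝ U, (∀ w : U, (∀ k, |ξ k w| ≤ 1) → η w ≤ 1) →
        η ∈ convexHull ℝ K0 := by
      intro η hη
      by_contra hc
      have hK0fin : K0.Finite := (Set.finite_range ξ).union (Set.finite_range _)
      set e := (Module.finBasis ℝ (Module.Dual ℝ U)).equivFun with he
      have himg : e '' (convexHull ℝ K0) = convexHull ℝ (e '' K0) :=
        e.toLinearMap.image_convexHull K0
      have hclosed : IsClosed (convexHull ℝ (e '' K0)) :=
        ((hK0fin.image e).isCompact_convexHull ℝ).isClosed
      have hnotin : e η ∉ convexHull ℝ (e '' K0) := by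
        intro h
        rw [← himg] at h
        obtain ⟨η', hη', heq⟩ := h
        exact hc (e.injective heq ▸ hη')
      obtain ⟨f, c, hfc, hcη⟩ :=
        geometric_hahn_banach_closed_point (convex_convexHull ℝ _) hclosed hnotin
      set w₀ := (Module.evalEquiv ℝ U).symm (f.toLinearMap ∘ₗ e.toLinearMap) with hw₀
      have hev : ∀ η' : Module.Dual ℝ U, η' w₀ = f (e η') := fun η' =>
        Module.apply_evalEquiv_symm_apply (R := ℝ) (M := U) η' _
      have hlt : ∀ a ∈ K0, f (e a) < c := fun a ha =>
        hfc _ (subset_convexHull ℝ _ (Set.mem_image_of_mem e ha))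
      have hc0 : (0:ℝ) < c := by
        have ha := hlt _ (Or.inl ⟨⟨0, hN⟩, rfl⟩ : ξ ⟨0, hN⟩ ∈ K0)
        have hbn := hlt _ (Or.inr ⟨⟨0, hN⟩, rfl⟩ : -ξ ⟨0, hN⟩ ∈ K0)
        rw [map_neg, map_neg] at hbn
        linarith
      have hb : ∀ k, |ξ k w₀| < c := by
        intro k
        have h1 := hlt _ (Or.inl ⟨k, rfl⟩ : ξ k ∈ K0)
        have h2 := hlt _ (Or.inr ⟨k, rfl⟩ : -ξ k ∈ K0)
        rw [map_neg, map_neg] at h2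
        rw [abs_lt]
        constructor
        · rw [hev]; linarith
        · rw [hev]; exact h1
      have hmem : ∀ k, |ξ k (c⁻¹ • w₀)| ≤ 1 := by
        intro k
        rw [map_smul, smul_eq_mul, abs_mul, abs_of_pos (inv_pos.2 hc0), inv_mul_le_iff₀ hc0,
          mul_one]
        exact (hb k).le
      have h4 := hη _ hmem
      have h5 : c < η w₀ := by rw [hev]; exact hcη
      rw [map_smul, smul_eq_mul, inv_mul_le_iff₀ hc0, mul_one] at h4
      linarith
    have hTQ : T '' Qset = convexHull ℝ K0 := by
      apply Set.Subset.antisymm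
      · rintro _ ⟨yy, hyy, rfl⟩
        apply hPolSub
        intro w hw
        rw [hTapp]
        have h1 := hyy.2 (PhiMap ξ w) ⟨LinearMap.mem_range_self _ _, fun k => hw k⟩
        calc ∑ k, yy k * ξ k w = ∑ k, (PhiMap ξ w) k * yy k := by
              refine Finset.sum_congr rfl fun i _ => ?_
              simp [PhiMap, mul_comm]
          _ ≤ 1 := h1
      · refine convexHull_min ?_ (hQconv.linear_image T)
        have key : ∀ η : Module.Dual ℝ U, (∀ u' : U, (∀ k, |ξ k u'| ≤ 1) → η u' ≤ 1) →
            η ∈ T '' Qset := by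
          intro η hηb
          obtain ⟨w, hw⟩ := hGsurj η
          refine ⟨PhiMap ξ w, ⟨LinearMap.mem_range_self _ _, ?_⟩, by rw [hTG, hw]⟩
          rintro xx ⟨⟨u', rfl⟩, hxxb⟩
          have h1 : ∀ k, |ξ k u'| ≤ 1 := fun k => hxxb k
          have h2 := hηb u' h1
          calc ∑ k, (PhiMap ξ u') k * (PhiMap ξ w) k = G w u' := by
                rw [hGapp]
                refine Finset.sum_congr rfl fun i _ => ?_
                simp [PhiMap, mul_comm]
            _ = η u' := by rw [hw]
            _ ≤ 1 := h2
        rintro η (⟨k, rfl⟩ | ⟨k, rfl⟩)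
        · refine key _ fun u' hu' => ?_
          exact (le_abs_self _).trans (hu' k)
        · refine key _ fun u' hu' => ?_
          have := (neg_abs_le (ξ k u')).trans (le_abs_self _)
          have h1 : -(ξ k u') ≤ |ξ k u'| := neg_le_abs _
          have h2 := hu' k
          simpa using h1.trans h2
    rw [mem_extremePoints] at hy
    obtain ⟨hyQ, hyext⟩ := hy
    have hTinjQ : ∀ a ∈ Qset, ∀ b ∈ Qset, T a = T b → a = b := by
      rintro a ⟨⟨ua, rfl⟩, -⟩ b ⟨⟨ub, rfl⟩, -⟩ hab
      rw [hTG, hTG] at hab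
      rw [hGinj hab]
    have hTy_mem : T y ∈ Set.extremePoints ℝ (T '' Qset) := by
      rw [mem_extremePoints]
      refine ⟨Set.mem_image_of_mem _ hyQ, ?_⟩
      rintro _ ⟨y₁, hy₁, rfl⟩ _ ⟨y₂, hy₂, rfl⟩ ⟨p, q, hp, hq, hpq, hseg⟩
      have h1 : T (p • y₁ + q • y₂) = T y := by rw [map_add, map_smul, map_smul]; exact hseg
      have h2 : p • y₁ + q • y₂ ∈ Qset := hQconv hy₁ hy₂ hp.le hq.le hpq
      have h3 : p • y₁ + q • y₂ = y := hTinjQ _ h2 _ hyQ h1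
      have h4 := hyext y₁ hy₁ y₂ hy₂ ⟨p, q, hp, hq, hpq, h3⟩
      exact ⟨congrArg T h4.1, congrArg T h4.2⟩
    have hTyK0 : T y ∈ K0 := extremePoints_convexHull_subset (hTQ ▸ hTy_mem)
    have hTyM : T y ∈ M := by
      rcases hTyK0 with ⟨k, hk⟩ | ⟨k, hk⟩
      · rw [← hk]; exact hξM k
      · rw [← hk]; exact Submodule.neg_mem _ (hξM k)
    have hfinal : ∃ z : ℤ, (T y) u = z := by
      refine span_int_eval u ?_ (by rw [hMS₀]; exact hTyM)
      rintro η ⟨i, hi, rfl⟩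
      obtain ⟨z, hz⟩ := hxZ i
      exact ⟨z, by simpa [PhiMap] using hz⟩
    obtain ⟨z, hz⟩ := hfinal
    refine ⟨z, ?_⟩
    rw [← hz, hTapp]
    refine Finset.sum_congr rfl fun i _ => ?_
    simp [PhiMap, mul_comm]
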